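/- Let R be a commutative ring, let σ be a finite type with r elements, let u : σ → R be any function and let W' be any function from finite subsets of σ to R. Define W on finite subsets of σ by W(Z) = Σ_{A ⊆ Z} (∏_{a ∈ A} u(a)) · W'(Z \ A). Then for every z_0 ∈ σ: Σ over subsets Z of σ containing z_0 of W'(Z) · ∏_{z' ∉ Z} (u(z') − u(z_0)) equals Σ over all subsets Z of σ of W(Z) · (−u(z_0))^{r − |Z|}. -/

import Mathlib

open Finset

/-- The combinatorial identity underlying the topological recursion formula:
if `W Z = Σ_{A ⊆ Z} (∏_{a ∈ A} u a) · W' (Z \ A)`, then for any `z₀`,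
`Σ_{z₀ ∈ Z ⊆ σ} W'(Z) ∏_{z' ∉ Z} (u z' − u z₀) = Σ_{Z ⊆ σ} W(Z) · (−u z₀)^{r − |Z|}`. -/
theorem stmt4 {R : Type*} [CommRing R] (σ : Type*) [Fintype σ] [DecidableEq σ]
    (r : ℕ) (hcard : Fintype.card σ = r)
    (u : σ → R) (W' W : Finset σ → R)
    (hW : ∀ Z : Finset σ, W Z = ∑ A ∈ Z.powerset, (∏ a ∈ A, u a) * W' (Z \ A))
    (z0 : σ) :
    ∑ Z ∈ (univ : Finset σ).powerset.filter (fun Z => z0 ∈ Z),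
        W' Z * ∏ z' ∈ (univ : Finset σ) \ Z, (u z' - u z0)
      = ∑ Z ∈ (univ : Finset σ).powerset, W Z * (-u z0) ^ (r - Z.card) := by
  classical
  have hz : ∀ Y : Finset σ, z0 ∉ Y →
      W' Y * ∏ z' ∈ (univ : Finset σ) \ Y, (u z' - u z0) = 0 := by
    intro Y hY
    rw [Finset.prod_eq_zero (show z0 ∈ univ \ Y by simp [hY]) (show u z0 - u z0 = 0 from sub_self _), mul_zero]
  rw [Finset.sum_filter_of_ne (fun Y _ h => by
    by_contra hz0; exact h (hz Y hz0))]
  have hprod : ∀ Y : Finset σ, (∏ z' ∈ (univ : Finset σ) \ Y, (u z' - u z0))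
      = ∑ A ∈ ((univ : Finset σ) \ Y).powerset,
          (∏ a ∈ A, u a) * (-u z0) ^ (((univ : Finset σ) \ Y).card - A.card) := by
    intro Y
    simp_rw [sub_eq_add_neg]
    rw [Finset.prod_add]
    exact Finset.sum_congr rfl fun A hA => by
      rw [Finset.prod_const, Finset.card_sdiff_of_subset (Finset.mem_powerset.mp hA)]
  simp_rw [hprod, Finset.mul_sum, hW, Finset.sum_mul]
  rw [Finset.sum_sigma', Finset.sum_sigma']
  refine Finset.sum_bij' (fun p _ => ⟨p.1 ∪ p.2, p.2⟩) (fun p _ => ⟨p.1 \ p.2, p.2⟩)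
    ?_ ?_ ?_ ?_ ?_
  · rintro ⟨Y, A⟩ hp
    simp only [Finset.mem_sigma, Finset.mem_powerset] at hp ⊢
    exact ⟨Finset.subset_univ _, Finset.subset_union_right⟩
  · rintro ⟨Z, A⟩ hp
    simp only [Finset.mem_sigma, Finset.mem_powerset] at hp ⊢
    exact ⟨Finset.subset_univ _, fun a ha => by
      simp only [Finset.mem_sdiff, Finset.mem_univ, true_and, not_and, not_not]
      exact fun _ => ha⟩
  · rintro ⟨Y, A⟩ hp
    simp only [Finset.mem_sigma, Finset.mem_powerset] at hp
    have hd : Disjoint Y A := by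
      rw [Finset.disjoint_right]
      intro a ha
      exact (Finset.mem_sdiff.mp (hp.2 ha)).2
    simp only [Sigma.mk.inj_iff, heq_eq_eq, and_true]
    exact Finset.union_sdiff_cancel_right hd
  · rintro ⟨Z, A⟩ hp
    simp only [Finset.mem_sigma, Finset.mem_powerset] at hp
    simp only [Sigma.mk.inj_iff, heq_eq_eq, and_true]
    exact Finset.sdiff_union_of_subset hp.2
  · rintro ⟨Y, A⟩ hp
    simp only [Finset.mem_sigma, Finset.mem_powerset] at hp
    have hd : Disjoint Y A := by
      rw [Finset.disjoint_right]
      intro a ha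
      exact (Finset.mem_sdiff.mp (hp.2 ha)).2
    have h1 : (Y ∪ A) \ A = Y := Finset.union_sdiff_cancel_right hd
    have h2 : (Y ∪ A).card = Y.card + A.card := Finset.card_union_of_disjoint hd
    have h3 : ((univ : Finset σ) \ Y).card = r - Y.card := by
      rw [Finset.card_sdiff_of_subset (Finset.subset_univ _), Finset.card_univ, hcard]
    have h4 : Y.card ≤ r := by
      rw [← hcard, ← Finset.card_univ]; exact Finset.card_le_card (Finset.subset_univ _)
    simp only [h1, h2, h3]
    rw [Nat.sub_sub]
    ring
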